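/- Let R_q = ℤ_q[X]/(Xⁿ+1) and R_p = ℤ_p[X]/(Xⁿ+1) with p dividing q (e.g., q and p powers of two with p < q). Given secret keys s₁,…,s_N ∈ R_q with s = Σᵢ sᵢ mod q, a public polynomial a ∈ R_q, errors eᵢ ∈ R_q, messages mᵢ ∈ R_q with coefficients lifted from R_p, and ciphertexts cᵢ = a·sᵢ + p̃·eᵢ + mᵢ mod q where p̃ is the constant polynomial p. If the coefficients of Σᵢ (p·eᵢ + mᵢ) (computed over ℤ with lifts in [0, q)) do not wrap modulo q, then ((Σᵢ cᵢ − a·s) mod q) mod p = (Σᵢ mᵢ) mod p. -/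
import Mathlib


open Polynomial

/-- Decryption correctness of ESHE aggregation. In `R_q = (ℤ/qℤ)[X]/(Xⁿ+1)` with `p ∣ q`,
given secret keys `sᵢ` with `s = Σᵢ sᵢ`, a public `a`, errors `eᵢ`, messages `mᵢ` whose
coefficients are lifted from `R_p` (i.e. have representatives `< p`), and ciphertexts
`cᵢ = a·sᵢ + p̃·eᵢ + mᵢ` (with `p̃` the constant polynomial `p`), if the coefficients of
`Σᵢ (p·eᵢ + mᵢ)` computed over `ℤ` via the lifts in `[0, q)` do not wrap modulo `q`, then
`((Σᵢ cᵢ − a·s) mod q) mod p = (Σᵢ mᵢ) mod p` coefficientwise. -/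
theorem eshe_decryption_correct (q p n N : ℕ) (hq : 1 < q) (hp : 1 < p) (hpq : p ∣ q)
    (hn : 0 < n) (hmonic : (X ^ n + 1 : Polynomial (ZMod q)).Monic)
    (a : AdjoinRoot (X ^ n + 1 : Polynomial (ZMod q)))
    (s e m c : Fin N → AdjoinRoot (X ^ n + 1 : Polynomial (ZMod q)))
    (skey : AdjoinRoot (X ^ n + 1 : Polynomial (ZMod q)))
    (hs : skey = ∑ i, s i)
    (hc : ∀ i, c i = a * s i + (p : AdjoinRoot (X ^ n + 1 : Polynomial (ZMod q))) * e i + m i)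
    (hm : ∀ i t, ((AdjoinRoot.modByMonicHom hmonic (m i)).coeff t).val < p)
    (hnowrap : ∀ t : ℕ,
      (∑ i, (p * ((AdjoinRoot.modByMonicHom hmonic (e i)).coeff t).val
        + ((AdjoinRoot.modByMonicHom hmonic (m i)).coeff t).val)) < q) :
    ∀ t : ℕ,
      ((AdjoinRoot.modByMonicHom hmonic ((∑ i, c i) - a * skey)).coeff t).val % p
        = (∑ i, ((AdjoinRoot.modByMonicHom hmonic (m i)).coeff t).val) % p := by
  haveI : NeZero q := ⟨by omega⟩
  intro t
  have key : (∑ i, c i) - a * skey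
      = ∑ i, ((p : AdjoinRoot (X ^ n + 1 : Polynomial (ZMod q))) * e i + m i) := by
    simp only [hc, hs, Finset.mul_sum, Finset.sum_add_distrib]
    ring
  rw [key, map_sum, Polynomial.finset_sum_coeff]
  have hcoeff : ∀ i, ((AdjoinRoot.modByMonicHom hmonic
      ((p : AdjoinRoot (X ^ n + 1 : Polynomial (ZMod q))) * e i + m i)).coeff t)
      = (p : ZMod q) * (AdjoinRoot.modByMonicHom hmonic (e i)).coeff t
        + (AdjoinRoot.modByMonicHom hmonic (m i)).coeff t := by
    intro i
    have : ((p : AdjoinRoot (X ^ n + 1 : Polynomial (ZMod q))) * e i + m i)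
        = p • e i + m i := by simp [nsmul_eq_mul]
    rw [this, map_add, map_nsmul, Polynomial.coeff_add, Polynomial.coeff_smul]
    simp [nsmul_eq_mul]
  have hsum : (∑ i, ((AdjoinRoot.modByMonicHom hmonic
      ((p : AdjoinRoot (X ^ n + 1 : Polynomial (ZMod q))) * e i + m i)).coeff t))
      = ((∑ i, (p * ((AdjoinRoot.modByMonicHom hmonic (e i)).coeff t).val
        + ((AdjoinRoot.modByMonicHom hmonic (m i)).coeff t).val) : ℕ) : ZMod q) := by
    push_cast
    refine Finset.sum_congr rfl fun i _ => ?_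
    rw [hcoeff i]
    simp [ZMod.natCast_val, ZMod.cast_id]
  rw [hsum, ZMod.val_natCast, Nat.mod_eq_of_lt (hnowrap t)]
  have : (∑ i, (p * ((AdjoinRoot.modByMonicHom hmonic (e i)).coeff t).val
      + ((AdjoinRoot.modByMonicHom hmonic (m i)).coeff t).val))
      = p * (∑ i, ((AdjoinRoot.modByMonicHom hmonic (e i)).coeff t).val)
        + ∑ i, ((AdjoinRoot.modByMonicHom hmonic (m i)).coeff t).val := by
    rw [Finset.sum_add_distrib, Finset.mul_sum]
  rw [this, Nat.mul_add_mod]
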